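/- Let R : X×X → I be a compact association scheme. For all f, g ∈ C(I,ℂ), the function (x,z) ↦ ∫_X f(R(x,y))·g(R(y,z)) dμ_X(y) is constant on every fiber R⁻¹(k) (k ∈ I); consequently (f∘R) ∘ (g∘R) ∈ 𝔄_R, i.e., 𝔄_R is closed under the matrix product. -/
import Mathlib


open MeasureTheory Topology Filter

noncomputable section

variable {X : Type*} {I : Type*}

/-- The matrix product `(A ∘ B)(x,z) = ∫ A(x,y) B(y,z) dμ(y)`. -/
def matProd [MeasurableSpace X] (μ : Measure X) (A B : X × X → ℂ) :
    X × X → ℂ :=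
  fun p => ∫ y, A (p.1, y) * B (y, p.2) ∂μ

/-- A compact association scheme: a quotient map `R : X × X → I` onto a compact
Hausdorff space satisfying (CAS1), (CAS2) and (CAS3). -/
def IsCompactAS [TopologicalSpace X] [TopologicalSpace I] [MeasurableSpace X]
    (μ : Measure X) (R : X × X → I) : Prop :=
  CompactSpace I ∧ T2Space I ∧ Topology.IsQuotientMap R ∧
    (∃ i₀ : I, R ⁻¹' {i₀} = {p : X × X | p.1 = p.2}) ∧
    (∀ W W' : Set I, MeasurableSet[borel I] W → MeasurableSet[borel I] W' →
      ∀ k : I, ∃ p : NNReal, ∀ x z : X, R (x, z) = k →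
        μ {y : X | R (x, y) ∈ W ∧ R (y, z) ∈ W'} = (p : ENNReal)) ∧
    (∀ i : I, ∃ iT : I, R ⁻¹' {iT} = Prod.swap ⁻¹' (R ⁻¹' {i}))

/-- Commutativity of a compact association scheme:
`p_{W,W'}^k = p_{W',W}^k` for all Borel `W, W'` and all `k`. -/
def CASComm [TopologicalSpace I] [MeasurableSpace X]
    (μ : Measure X) (R : X × X → I) : Prop :=
  ∀ W W' : Set I, MeasurableSet[borel I] W → MeasurableSet[borel I] W' →
    ∀ x z x' z' : X, R (x, z) = R (x', z') →
      μ {y : X | R (x, y) ∈ W ∧ R (y, z) ∈ W'} =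
        μ {y : X | R (x', y) ∈ W' ∧ R (y, z') ∈ W}

/-- Symmetry of a compact association scheme: `i⊤ = i` for all `i`,
i.e. every fiber of `R` is invariant under `Prod.swap`. -/
def CASSymm (R : X × X → I) : Prop :=
  ∀ i : I, R ⁻¹' {i} = Prod.swap ⁻¹' (R ⁻¹' {i})

/-- The algebra `𝔄_R = {f ∘ R : f ∈ C(I, ℂ)}`. -/
def ARset [TopologicalSpace X] [TopologicalSpace I] (R : X × X → I) :
    Set C(X × X, ℂ) :=
  {F | ∃ f : C(I, ℂ), ∀ p : X × X, F p = f (R p)}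

theorem stmt4 [TopologicalSpace X] [CompactSpace X] [T2Space X] [Nonempty X]
    [MeasurableSpace X] [BorelSpace X]
    (μ : Measure X) [IsFiniteMeasure μ] [μ.Regular] [μ.IsOpenPosMeasure]
    [TopologicalSpace I]
    (R : X × X → I) (hR : IsCompactAS μ R) (f g : C(I, ℂ)) :
    (∀ x z x' z' : X, R (x, z) = R (x', z') →
      matProd μ (fun q => f (R q)) (fun q => g (R q)) (x, z) =
        matProd μ (fun q => f (R q)) (fun q => g (R q)) (x', z')) ∧
    ∃ h : C(I, ℂ), ∀ p : X × X,
      matProd μ (fun q => f (R q)) (fun q => g (R q)) p = h (R p) := by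
  obtain ⟨hcI, ht2I, hq, -, hcas2, -⟩ := hR
  haveI := hcI; haveI := ht2I
  letI : MeasurableSpace I := borel I
  haveI : BorelSpace I := ⟨rfl⟩
  have hRc : Continuous R := hq.continuous
  have hφm : ∀ x z : X, Measurable (fun y => (R (x, y), R (y, z))) := by
    intro x z
    exact Measurable.prodMk
      (hRc.comp (Continuous.prodMk_right x)).measurable
      (hRc.comp (continuous_id.prodMk continuous_const)).measurable
  -- fiber constancy of the pushforward measure
  have hmap : ∀ x z x' z' : X, R (x, z) = R (x', z') →
      μ.map (fun y => (R (x, y), R (y, z))) =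
        μ.map (fun y => (R (x', y), R (y, z'))) := by
    intro x z x' z' hk
    refine MeasureTheory.ext_of_generate_finite _
      generateFrom_prod.symm isPiSystem_prod ?_ ?_
    · rintro s ⟨W, hW, W', hW', rfl⟩
      have hW2 : MeasurableSet W := hW
      have hW'2 : MeasurableSet W' := hW'
      rw [Measure.map_apply (hφm x z) (hW2.prod hW'2),
          Measure.map_apply (hφm x' z') (hW2.prod hW'2)]
      obtain ⟨p, hp⟩ := hcas2 W W' hW2 hW'2 (R (x, z))
      have h1 := hp x z rfl
      have h2 := hp x' z' hk.symm
      have e1 : (fun y => (R (x, y), R (y, z))) ⁻¹' (W ×ˢ W')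
          = {y : X | R (x, y) ∈ W ∧ R (y, z) ∈ W'} := rfl
      have e2 : (fun y => (R (x', y), R (y, z'))) ⁻¹' (W ×ˢ W')
          = {y : X | R (x', y) ∈ W ∧ R (y, z') ∈ W'} := rfl
      rw [e1, e2, h1, h2]
    · rw [Measure.map_apply (hφm x z) MeasurableSet.univ,
        Measure.map_apply (hφm x' z') MeasurableSet.univ]
      simp
  -- the integrand on I × I
  set k : I × I → ℂ := fun p => f p.1 * g p.2 with hk_def
  have hfm : Measurable (f : I → ℂ) := f.continuous.measurable
  have hgm : Measurable (g : I → ℂ) := g.continuous.measurable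
  have hkm : Measurable k :=
    (hfm.comp measurable_fst).mul (hgm.comp measurable_snd)
  have hrepr : ∀ x z : X,
      matProd μ (fun q => f (R q)) (fun q => g (R q)) (x, z) =
        ∫ p, k p ∂(μ.map fun y => (R (x, y), R (y, z))) := by
    intro x z
    rw [MeasureTheory.integral_map (hφm x z).aemeasurable
      hkm.stronglyMeasurable.aestronglyMeasurable]
    rfl
  have hconst : ∀ x z x' z' : X, R (x, z) = R (x', z') →
      matProd μ (fun q => f (R q)) (fun q => g (R q)) (x, z) =
        matProd μ (fun q => f (R q)) (fun q => g (R q)) (x', z') := by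
    intro x z x' z' hkk
    rw [hrepr x z, hrepr x' z', hmap x z x' z' hkk]
  refine ⟨hconst, ?_⟩
  -- continuity of the matrix product
  set F : X × X → ℂ := matProd μ (fun q => f (R q)) (fun q => g (R q)) with hF_def
  have hAint : ∀ A : C(X, ℂ), Integrable A μ := by
    intro A
    exact A.continuous.integrable_of_hasCompactSupport
      ((isClosed_tsupport _).isCompact)
  have hlip : LipschitzWith (μ Set.univ).toNNReal
      (fun A : C(X, ℂ) => ∫ y, A y ∂μ) := by
    apply LipschitzWith.of_dist_le_mul
    intro A B
    rw [dist_eq_norm, ← MeasureTheory.integral_sub (hAint A) (hAint B)]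
    calc ‖∫ y, (A y - B y) ∂μ‖
        ≤ dist A B * (μ Set.univ).toReal := by
          have hb : ∀ᵐ (y : X) ∂μ, ‖A y - B y‖ ≤ dist A B := by
            filter_upwards with y
            rw [← dist_eq_norm]
            exact ContinuousMap.dist_apply_le_dist y
          exact MeasureTheory.norm_integral_le_of_norm_le_const hb
      _ = ↑(μ Set.univ).toNNReal * dist A B := by rw [mul_comm]; rfl
  set G : C((X × X) × X, ℂ) :=
    ⟨fun q => f (R (q.1.1, q.2)) * g (R (q.2, q.1.2)),
      ((f.continuous.comp hRc).comp
        ((continuous_fst.comp continuous_fst).prodMk continuous_snd)).mul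
      ((g.continuous.comp hRc).comp
        (continuous_snd.prodMk (continuous_snd.comp continuous_fst)))⟩
    with hG_def
  have hFc : Continuous F := by
    have : F = (fun A : C(X, ℂ) => ∫ y, A y ∂μ) ∘ (G.curry : X × X → C(X, ℂ)) := rfl
    rw [this]
    exact hlip.continuous.comp G.curry.continuous
  have hsurj : Function.Surjective R := hq.surjective
  set h : I → ℂ := F ∘ Function.surjInv hsurj with hh_def
  have hhR : ∀ p : X × X, h (R p) = F p := by
    intro p
    have hRp : R (Function.surjInv hsurj (R p)) = R p :=
      Function.surjInv_eq hsurj (R p)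
    have := hconst (Function.surjInv hsurj (R p)).1
      (Function.surjInv hsurj (R p)).2 p.1 p.2 hRp
    simpa [hh_def, hF_def] using this
  have hhc : Continuous h := by
    rw [hq.continuous_iff]
    have : h ∘ R = F := funext hhR
    rw [this]
    exact hFc
  exact ⟨⟨h, hhc⟩, fun p => (hhR p).symm⟩
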